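/- Let X, Y be finite sets, P a distribution on X, W a channel from X to Y, S ⊆ X × Y, and C = {x_1,...,x_L} ⊆ X a multiset of codewords with W_C(y) = (1/L)Σ_l W_{x_l}(y). Suppose for every y ∈ Y, W_P^S(y) - W_C^S(y) ≤ 2ε·W_P^S(y) (where superscript S denotes restriction to S). Then the total variation distance satisfies d_var(W_P, W_C) ≤ 2ε + Σ_{(x,y)∈S^c} P(x)·W_x(y). -/
import Mathlib


open Finset Classical in
/-- From pointwise domination on the truncated measure to a bound on total
variation distance plus the escaping probability of `S`. -/
theorem singleshot_tv_from_domination {X Y : Type*} [Fintype X] [Fintype Y]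
    (P : X → ℝ) (hP0 : ∀ x, 0 ≤ P x) (hP1 : ∑ x : X, P x = 1)
    (W : X → Y → ℝ) (hW0 : ∀ x y, 0 ≤ W x y) (hW1 : ∀ x, ∑ y : Y, W x y = 1)
    (S : Finset (X × Y))
    (L : ℕ) (hLpos : 0 < L) (xl : Fin L → X)
    (ε : ℝ) (hε0 : 0 ≤ ε)
    (WP : Y → ℝ) (hWP : ∀ y, WP y = ∑ x : X, P x * W x y)
    (WC : Y → ℝ) (hWC : ∀ y, WC y = (1 / (L : ℝ)) * ∑ l : Fin L, W (xl l) y)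
    (WPS : Y → ℝ)
    (hWPS : ∀ y, WPS y = ∑ x : X, P x * (if (x, y) ∈ S then W x y else 0))
    (WCS : Y → ℝ)
    (hWCS : ∀ y, WCS y = (1 / (L : ℝ)) *
      ∑ l : Fin L, (if (xl l, y) ∈ S then W (xl l) y else 0))
    (hdom : ∀ y, WPS y - WCS y ≤ 2 * ε * WPS y) :
    (1 / 2) * ∑ y : Y, |WP y - WC y| ≤
      2 * ε + ∑ p ∈ Sᶜ, P p.1 * W p.1 p.2 := by
  have hLR : (0:ℝ) < (L:ℝ) := by exact_mod_cast hLpos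
  -- basic pointwise facts
  have hWPS_le : ∀ y, WPS y ≤ WP y := by
    intro y
    rw [hWPS, hWP]
    apply Finset.sum_le_sum
    intro x _
    have : (if (x, y) ∈ S then W x y else 0) ≤ W x y := by
      split <;> [exact le_refl _; exact hW0 x y]
    exact mul_le_mul_of_nonneg_left this (hP0 x)
  have hWPS0 : ∀ y, 0 ≤ WPS y := by
    intro y
    rw [hWPS]
    apply Finset.sum_nonneg
    intro x _
    exact mul_nonneg (hP0 x) (by split <;> [exact hW0 x y; exact le_refl 0])
  have hWCS_le : ∀ y, WCS y ≤ WC y := by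
    intro y
    rw [hWCS, hWC]
    apply mul_le_mul_of_nonneg_left _ (by positivity)
    apply Finset.sum_le_sum
    intro l _
    split <;> [exact le_refl _; exact hW0 _ y]
  -- total masses
  have hWPsum : ∑ y : Y, WP y = 1 := by
    simp only [hWP]
    rw [Finset.sum_comm]
    simp_rw [← Finset.mul_sum, hW1, mul_one, hP1]
  have hWCsum : ∑ y : Y, WC y = 1 := by
    simp only [hWC]
    rw [← Finset.mul_sum, Finset.sum_comm]
    simp_rw [hW1]
    simp
    field_simp
  have hsum0 : ∑ y : Y, (WP y - WC y) = 0 := by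
    rw [Finset.sum_sub_distrib, hWPsum, hWCsum]; ring
  -- |a| = 2 * max a 0 - a
  have habs : ∀ y : Y, |WP y - WC y| = 2 * max (WP y - WC y) 0 - (WP y - WC y) := by
    intro y
    rcases le_or_gt 0 (WP y - WC y) with h | h
    · rw [abs_of_nonneg h, max_eq_left h]; ring
    · rw [abs_of_neg h, max_eq_right h.le]; ring
  have hsplit : ∑ y : Y, |WP y - WC y| = 2 * ∑ y : Y, max (WP y - WC y) 0 := by
    simp_rw [habs]
    rw [Finset.sum_sub_distrib, hsum0, ← Finset.mul_sum]
    ring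
  -- pointwise bound on the positive part
  have hpt : ∀ y : Y, max (WP y - WC y) 0 ≤ 2 * ε * WPS y + (WP y - WPS y) := by
    intro y
    have h1 : 0 ≤ 2 * ε * WPS y := mul_nonneg (by positivity) (hWPS0 y)
    have h2 : 0 ≤ WP y - WPS y := sub_nonneg.mpr (hWPS_le y)
    apply max_le _ (by linarith)
    have := hdom y
    have := hWCS_le y
    linarith
  have hbound : ∑ y : Y, max (WP y - WC y) 0 ≤
      2 * ε + ∑ y : Y, (WP y - WPS y) := by
    calc ∑ y : Y, max (WP y - WC y) 0
        ≤ ∑ y : Y, (2 * ε * WPS y + (WP y - WPS y)) :=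
          Finset.sum_le_sum fun y _ => hpt y
      _ = 2 * ε * (∑ y : Y, WPS y) + ∑ y : Y, (WP y - WPS y) := by
          rw [Finset.sum_add_distrib, Finset.mul_sum]
      _ ≤ 2 * ε + ∑ y : Y, (WP y - WPS y) := by
          have h1 : ∑ y : Y, WPS y ≤ 1 := by
            rw [← hWPsum]
            exact Finset.sum_le_sum fun y _ => hWPS_le y
          nlinarith
  -- identify the escaping mass
  have hescape : ∑ y : Y, (WP y - WPS y) = ∑ p ∈ Sᶜ, P p.1 * W p.1 p.2 := by
    simp_rw [hWP, hWPS, ← Finset.sum_sub_distrib, ← mul_sub]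
    have : ∀ y x, P x * (W x y - if (x, y) ∈ S then W x y else 0)
        = if (x, y) ∈ Sᶜ then P x * W x y else 0 := by
      intro y x
      by_cases h : (x, y) ∈ S <;> simp [h]
    simp_rw [this]
    rw [Finset.sum_comm]
    rw [← Finset.sum_product']
    rw [Finset.univ_product_univ, Finset.sum_ite_mem, Finset.univ_inter]
  rw [hsplit]
  rw [hescape] at hbound
  linarith [hbound]
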